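/- Along any solution of the Lagrange bitop equations Ṁ = [M,Ω] + [Γ,χ], Γ̇ = [Γ,Ω] on so(4) × so(4) with I₁ = I₂ = a, I₃ = I₄ = b (so M = IΩ + ΩI), and χ skew with nonzero entries only χ₁₂, χ₃₄, the quantities B = 2(C₁₂M₁₂ + C₃₄M₃₄) and H = C₃₄M₁₂ + C₁₂M₃₄, where C = (a+b)χ, are first integrals (have zero time derivative). -/

import Mathlib

open Matrix

/-- For the Lagrange bitop (`I₁ = I₂ = a`, `I₃ = I₄ = b`, `χ` skew with only
`χ₁₂, χ₃₄` nonzero, `C = (a+b)χ`), the quantities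
`B = 2(C₁₂M₁₂ + C₃₄M₃₄)` and `H = C₃₄M₁₂ + C₁₂M₃₄` are first integrals. -/
theorem lagrange_bitop_first_integrals
    (a b chi12 chi34 : ℝ) (hab : a ≠ b)
    (M Γ : ℝ → Matrix (Fin 4) (Fin 4) ℝ)
    (hskewM : ∀ t, (M t)ᵀ = -(M t)) (hskewΓ : ∀ t, (Γ t)ᵀ = -(Γ t))
    (Iv : Fin 4 → ℝ) (hIv : Iv = ![a, a, b, b])
    (Ω : ℝ → Matrix (Fin 4) (Fin 4) ℝ)
    (hΩ : ∀ t i j, M t i j = (Iv i + Iv j) * Ω t i j)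
    (χ : Matrix (Fin 4) (Fin 4) ℝ)
    (hχ : χ = !![0, chi12, 0, 0; -chi12, 0, 0, 0; 0, 0, 0, chi34; 0, 0, -chi34, 0])
    (C : Matrix (Fin 4) (Fin 4) ℝ) (hC : C = (a + b) • χ)
    (hM : ∀ (t : ℝ) (i j : Fin 4),
      HasDerivAt (fun s => M s i j)
        ((⁅M t, Ω t⁆ + ⁅Γ t, χ⁆ : Matrix (Fin 4) (Fin 4) ℝ) i j) t)
    (hΓ : ∀ (t : ℝ) (i j : Fin 4),
      HasDerivAt (fun s => Γ s i j)
        ((⁅Γ t, Ω t⁆ : Matrix (Fin 4) (Fin 4) ℝ) i j) t) :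
    (∀ t, HasDerivAt (fun s => 2 * (C 0 1 * M s 0 1 + C 2 3 * M s 2 3)) 0 t) ∧
    (∀ t, HasDerivAt (fun s => C 2 3 * M s 0 1 + C 0 1 * M s 2 3) 0 t) := by
  -- diagonal entries of Γ vanish
  have hΓd : ∀ t (i : Fin 4), Γ t i i = 0 := by
    intro t i
    have := congrFun (congrFun (hskewΓ t) i) i
    simp [Matrix.transpose_apply, Matrix.neg_apply] at this
    linarith
  -- the derivatives of M₁₂ and M₃₄ vanish
  have key : ∀ t, ((⁅M t, Ω t⁆ + ⁅Γ t, χ⁆ : Matrix (Fin 4) (Fin 4) ℝ) 0 1 = 0)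
      ∧ ((⁅M t, Ω t⁆ + ⁅Γ t, χ⁆ : Matrix (Fin 4) (Fin 4) ℝ) 2 3 = 0) := by
    intro t
    constructor <;>
    · simp only [Ring.lie_def, Matrix.add_apply, Matrix.sub_apply, Matrix.mul_apply,
        Fin.sum_univ_four, hχ, hΩ, hIv, hΓd]
      simp [Matrix.vecHead, Matrix.vecTail]
      ring
  constructor
  · intro t'
    have h1 : HasDerivAt (fun s => M s 0 1) 0 t' := by
      have := hM t' 0 1; rwa [(key t').1] at this
    have h2 : HasDerivAt (fun s => M s 2 3) 0 t' := by
      have := hM t' 2 3; rwa [(key t').2] at this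
    have := ((h1.const_mul (C 0 1)).add (h2.const_mul (C 2 3))).const_mul 2
    simpa using this
  · intro t'
    have h1 : HasDerivAt (fun s => M s 0 1) 0 t' := by
      have := hM t' 0 1; rwa [(key t').1] at this
    have h2 : HasDerivAt (fun s => M s 2 3) 0 t' := by
      have := hM t' 2 3; rwa [(key t').2] at this
    have := (h1.const_mul (C 2 3)).add (h2.const_mul (C 0 1))
    exact this.congr_deriv (by simp)
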